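/- If β < α, then T_β embeds into T_α as a downward-closed suborder below a single element; consequently, if β < α then G_β embeds into G_α as an induced subgraph, for any countable graph G. -/

import Mathlib

open Cardinal Ordinal

/-- The poset `T α`: strictly decreasing finite lists of ordinals `< α`, ordered by
reverse strict-prefix; the empty list is the top element, and the lists starting with `β`
form the copy of `T β`. -/
def TT (α : Ordinal) : Type 1 :=
  {l : List Ordinal // l.Pairwise (· > ·) ∧ ∀ x ∈ l, x < α}

instance instPOTT (α : Ordinal) : PartialOrder (TT α) where
  le u v := v.1 <+: u.1
  le_refl u := List.prefix_refl _
  le_trans _ _ _ h1 h2 := List.IsPrefix.trans h2 h1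
  le_antisymm _ _ h1 h2 :=
    Subtype.ext (List.IsPrefix.eq_of_length h2 ((List.IsPrefix.length_le h2).antisymm (List.IsPrefix.length_le h1)))

/-- The top element of `T α`. -/
def topT (α : Ordinal) : TT α := ⟨[], by simp, by simp⟩

/-- The rank function of the reversed order `⟨T α, >⟩`. -/
def dT {α : Ordinal} (v : TT α) : ℕ := v.1.length

/-- The rank function of `⟨T α, <⟩`; the top element has rank `α`. -/
def rT {α : Ordinal} (v : TT α) : Ordinal := v.1.getLastD α

/-- The graph `G_α` on `T α`: `u ~ v` iff `u, v` are comparable and `d u ~_G d v`. -/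
def Gg (G : SimpleGraph ℕ) (α : Ordinal) : SimpleGraph (TT α) where
  Adj u v := u ≠ v ∧ (u ≤ v ∨ v ≤ u) ∧ G.Adj (dT u) (dT v)
  symm := ⟨fun _ _ h => ⟨Ne.symm h.1, h.2.1.symm, h.2.2.symm⟩⟩
  loopless := ⟨fun _ h => h.1 rfl⟩

/-- The one-way infinite path `P_ω` on `ℕ`. -/
def rayG : SimpleGraph ℕ := SimpleGraph.fromRel (fun m n => n = m + 1)

/-- `A` is a (not necessarily induced) subgraph of `B`. -/
def SubCopy {X Y : Type*} (A : SimpleGraph X) (B : SimpleGraph Y) : Prop :=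
  ∃ f : X ↪ Y, ∀ u v, A.Adj u v → B.Adj (f u) (f v)

/-- `R` is (isomorphic to) the countable random graph: the extension property. -/
def IsRado (R : SimpleGraph ℕ) : Prop :=
  ∀ A B : Finset ℕ, Disjoint A B →
    ∃ v, v ∉ A ∧ v ∉ B ∧ (∀ a ∈ A, R.Adj v a) ∧ (∀ b ∈ B, ¬R.Adj v b)

/-- An `(s, ξ)`-embedding: an induced embedding of some `G_α`, `ξ ≤ α < λ⁺`, into `H`
whose image contains `s` as the top part of a chain with `d`-values `0, …, n` and whose
last vertex has rank `> ξ`. -/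
def IsSXEmb {V : Type} (G : SimpleGraph ℕ) (lam : Cardinal) (H : SimpleGraph V)
    (s : List V) (ξ : Ordinal) : Prop :=
  ∃ α : Ordinal, ξ ≤ α ∧ α < (Order.succ lam).ord ∧
    ∃ (f : Gg G α ↪g H) (t : List (TT α)),
      s = t.map ⇑f ∧
      (∀ i : Fin t.length, dT (t.get i) = i.1) ∧
      (∀ u ∈ t, ∀ v ∈ t, u ≤ v ∨ v ≤ u) ∧
      (∀ v ∈ t.getLast?, ξ < rT v)

/-- The set `U` of finite sequences admitting `(s, ξ)`-embeddings for all `ξ < λ⁺`. -/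
def UU {V : Type} (G : SimpleGraph ℕ) (lam : Cardinal) (H : SimpleGraph V) :
    Set (List V) :=
  {s | ∀ ξ < (Order.succ lam).ord, IsSXEmb G lam H s ξ}


/-- if `β < α` then `T β` embeds into `T α` as the downward-closed
suborder below a single element, and consequently `G_β` embeds into `G_α` as an
induced subgraph for every countable `G`. -/
theorem stmt16 (α β : Ordinal) (h : β < α) :
    (∃ e : TT β ↪o TT α, Set.range ⇑e = {y : TT α | y ≤ e (topT β)}) ∧
      ∀ G : SimpleGraph ℕ, Nonempty (Gg G β ↪g Gg G α) := by
  constructor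
  · -- order embedding: prepend β
    refine ⟨⟨⟨fun u => ⟨β :: u.1, ?_, ?_⟩, ?_⟩, ?_⟩, ?_⟩
    · exact List.pairwise_cons.2 ⟨fun x hx => u.2.2 x hx, u.2.1⟩
    · intro x hx
      rcases List.mem_cons.1 hx with rfl | hx
      · exact h
      · exact (u.2.2 x hx).trans h
    · intro u v huv
      have := congrArg Subtype.val huv
      simp only [List.cons.injEq] at this
      exact Subtype.ext this.2
    · intro u v
      show (β :: v.1 <+: β :: u.1) ↔ (v.1 <+: u.1)
      simp [List.cons_prefix_cons]
    · ext y
      simp only [Set.mem_range, Set.mem_setOf_eq]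
      constructor
      · rintro ⟨u, rfl⟩
        show (β :: (topT β).1) <+: β :: u.1
        exact ⟨u.1, rfl⟩
      · intro hy
        obtain ⟨rest, hrest⟩ : (β :: (topT β).1) <+: y.1 := hy
        simp only [topT, List.nil_append] at hrest
        have hs : y.1.Pairwise (· > ·) := y.2.1
        rw [← hrest] at hs
        refine ⟨⟨rest, (List.pairwise_cons.1 hs).2, fun x hx => (List.pairwise_cons.1 hs).1 x hx⟩, ?_⟩
        exact Subtype.ext hrest
  · -- graph embedding: identity inclusion
    intro G
    refine ⟨⟨⟨fun u => ⟨u.1, u.2.1, fun x hx => (u.2.2 x hx).trans h⟩, ?_⟩, ?_⟩⟩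
    · intro u v huv
      have h2 := congrArg Subtype.val huv
      exact Subtype.ext h2

    · intro u v
      show (_ ≠ _ ∧ _ ∧ _) ↔ (_ ≠ _ ∧ _ ∧ _)
      constructor
      · rintro ⟨h1, h2, h3⟩
        refine ⟨fun hh => h1 (by cases u; cases v; simp_all), h2, h3⟩
      · rintro ⟨h1, h2, h3⟩
        refine ⟨fun hh => h1 ?_, h2, h3⟩
        have h4 := congrArg Subtype.val hh
        exact Subtype.ext h4
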